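/- Let ε = ±1 and k_g, k_n, τ_g be real constants, A = ![![0, k_g, -ε k_n], ![k_g, 0, ε τ_g], ![k_n, τ_g, 0]], and ω > 0. If τ_g = 0, ε k_n² − k_g² > 0, and √(ε k_n² − k_g²) = 2kπ/ω for some nonzero integer k, then exp(ωA) = I and the first row of ∫₀^ω (exp(sA) − I) ds equals (−ω, 0, 0). -/

import Mathlib

open Matrix

lemma exp_formula_aux (A : Matrix (Fin 3) (Fin 3) ℝ) (θ : ℝ) (hθ : θ ≠ 0)
    (h3 : A * A * A = (-(θ ^ 2)) • A) (t : ℝ) :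
    NormedSpace.exp (t • A) =
      1 + (Real.sin (θ * t) / θ) • A + ((1 - Real.cos (θ * t)) / θ ^ 2) • (A * A) := by
  letI : SeminormedRing (Matrix (Fin 3) (Fin 3) ℝ) := Matrix.linftyOpSemiNormedRing
  letI : NormedRing (Matrix (Fin 3) (Fin 3) ℝ) := Matrix.linftyOpNormedRing
  letI : NormedAlgebra ℝ (Matrix (Fin 3) (Fin 3) ℝ) := Matrix.linftyOpNormedAlgebra
  set g : ℝ → Matrix (Fin 3) (Fin 3) ℝ := fun u =>
    1 + (Real.sin (θ * u) / θ) • A + ((1 - Real.cos (θ * u)) / θ ^ 2) • (A * A) with hgdef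
  have hlin : ∀ u : ℝ, HasDerivAt (fun u : ℝ => θ * u) θ u := by
    intro u; simpa using (hasDerivAt_id u).const_mul θ
  have s1 : ∀ u : ℝ, HasDerivAt (fun u => Real.sin (θ * u) / θ) (Real.cos (θ * u)) u := by
    intro u
    have h := ((Real.hasDerivAt_sin (θ * u)).comp u (hlin u)).div_const θ
    simpa [mul_div_assoc, mul_div_cancel_right₀ _ hθ] using h
  have s2 : ∀ u : ℝ, HasDerivAt (fun u => (1 - Real.cos (θ * u)) / θ ^ 2)
      (Real.sin (θ * u) / θ) u := by
    intro u
    have h := (((Real.hasDerivAt_cos (θ * u)).comp u (hlin u)).const_sub 1).div_const (θ ^ 2)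
    refine h.congr_deriv ?_
    field_simp
  have hg : ∀ u : ℝ, HasDerivAt g
      (Real.cos (θ * u) • A + (Real.sin (θ * u) / θ) • (A * A)) u := by
    intro u
    have h := ((hasDerivAt_const u (1 : Matrix (Fin 3) (Fin 3) ℝ)).add
      ((s1 u).smul_const A)).add ((s2 u).smul_const (A * A))
    simp only [zero_add] at h
    exact h
  have hAg : ∀ u : ℝ, A * g u = Real.cos (θ * u) • A + (Real.sin (θ * u) / θ) • (A * A) := by
    intro u
    simp only [hgdef, mul_add, mul_one, Matrix.mul_smul, ← Matrix.mul_assoc]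
    rw [h3]
    rw [smul_smul]
    match_scalars <;> field_simp <;> ring
  have hh : ∀ u : ℝ, HasDerivAt (fun u => NormedSpace.exp (u • (-A)) * g u) 0 u := by
    intro u
    have h1 := hasDerivAt_exp_smul_const (𝕂 := ℝ) (-A) u
    have h := h1.mul (hg u)
    refine h.congr_deriv ?_
    rw [Matrix.mul_assoc, ← Matrix.mul_add]
    have : -A * g u + (Real.cos (θ * u) • A + (Real.sin (θ * u) / θ) • (A * A)) = 0 := by
      rw [Matrix.neg_mul, hAg u]; abel
    rw [this, Matrix.mul_zero]
  have hconst : NormedSpace.exp (t • (-A)) * g t = 1 := by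
    have hd : Differentiable ℝ (fun u => NormedSpace.exp (u • (-A)) * g u) :=
      fun u => (hh u).differentiableAt
    have h := is_const_of_deriv_eq_zero hd (fun u => (hh u).deriv) t 0
    simpa [hgdef] using h
  have hcomm : Commute (t • A) (t • (-A)) := by
    simp [Commute, SemiconjBy, smul_neg, mul_smul_comm, smul_mul_assoc]
  have hinv : NormedSpace.exp (t • A) * NormedSpace.exp (t • (-A)) = 1 := by
    rw [← Matrix.exp_add_of_commute _ _ hcomm]
    simp
  calc NormedSpace.exp (t • A) = NormedSpace.exp (t • A) *
        (NormedSpace.exp (t • (-A)) * g t) := by rw [hconst, Matrix.mul_one]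
    _ = (NormedSpace.exp (t • A) * NormedSpace.exp (t • (-A))) * g t := by
        rw [Matrix.mul_assoc]
    _ = g t := by rw [hinv, Matrix.one_mul]

/-- Sufficiency direction of the closedness criterion: if `τ_g = 0`, `ε k_n² − k_g² > 0` and
`√(ε k_n² − k_g²) = 2kπ/ω` for some nonzero integer `k`, then `exp(ωA) = I` and the first row
of `∫₀^ω (exp(sA) − I) ds` is `(−ω, 0, 0)`. -/
theorem stmt_9 (kg kn τg ε : ℝ) (hε : ε = 1 ∨ ε = -1)
    (A : Matrix (Fin 3) (Fin 3) ℝ)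
    (hA : A = !![0, kg, -ε * kn; kg, 0, ε * τg; kn, τg, 0])
    (ω : ℝ) (hω : 0 < ω)
    (hτ : τg = 0) (hpos : 0 < ε * kn ^ 2 - kg ^ 2)
    (k : ℤ) (hk : k ≠ 0)
    (hfreq : Real.sqrt (ε * kn ^ 2 - kg ^ 2) = 2 * k * Real.pi / ω) :
    NormedSpace.exp (ω • A) = 1 ∧
      (∫ s in (0:ℝ)..ω, (NormedSpace.exp (s • A) - 1) 0 0) = -ω ∧
      (∫ s in (0:ℝ)..ω, (NormedSpace.exp (s • A) - 1) 0 1) = 0 ∧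
      (∫ s in (0:ℝ)..ω, (NormedSpace.exp (s • A) - 1) 0 2) = 0 := by
  have hε2 : ε * ε = 1 := by rcases hε with rfl | rfl <;> norm_num
  obtain ⟨θ, hθdef⟩ : ∃ θ : ℝ, θ = Real.sqrt (ε * kn ^ 2 - kg ^ 2) := ⟨_, rfl⟩
  have hθ2 : θ ^ 2 = ε * kn ^ 2 - kg ^ 2 := by rw [hθdef]; exact Real.sq_sqrt hpos.le
  have hθpos : 0 < θ := by rw [hθdef]; exact Real.sqrt_pos.mpr hpos
  have hθ : θ ≠ 0 := hθpos.ne'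
  have h3 : A * A * A = (-(θ ^ 2)) • A := by
    subst hτ hA
    ext i j
    fin_cases i <;> fin_cases j <;>
      · simp [Matrix.mul_apply, Fin.sum_univ_three, Matrix.vecHead, Matrix.vecTail, hθ2]
        try first
        | exact Or.inl (by ring)
        | ring
        | linear_combination (-kn) * hε2
        | linear_combination (kn * kn * kn) * hε2
        | linear_combination (-(kn * kn * kn)) * hε2
  have key := exp_formula_aux A θ hθ h3
  have hmul : θ * ω = (k : ℝ) * (2 * Real.pi) := by
    rw [hθdef, hfreq]; field_simp
  have hcos : Real.cos (θ * ω) = 1 := by rw [hmul]; exact Real.cos_int_mul_two_pi k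
  have hsin : Real.sin (θ * ω) = 0 := by
    rw [hmul, show (k : ℝ) * (2 * Real.pi) = ((2 * k : ℤ) : ℝ) * Real.pi by push_cast; ring]
    exact Real.sin_int_mul_pi _
  have hA00 : A 0 0 = 0 := by rw [hA]; simp
  have hA01 : A 0 1 = kg := by rw [hA]; simp
  have hA02 : A 0 2 = -ε * kn := by rw [hA]; simp
  have hAA00 : (A * A) 0 0 = -θ ^ 2 := by
    rw [hA, hτ]
    simp [Matrix.mul_apply, Fin.sum_univ_three, Matrix.vecHead, Matrix.vecTail, hθ2]
    try ring
  have hAA01 : (A * A) 0 1 = 0 := by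
    rw [hA, hτ]
    simp [Matrix.mul_apply, Fin.sum_univ_three, Matrix.vecHead, Matrix.vecTail]
  have hAA02 : (A * A) 0 2 = 0 := by
    rw [hA, hτ]
    simp [Matrix.mul_apply, Fin.sum_univ_three, Matrix.vecHead, Matrix.vecTail]
  have e00 : ∀ s : ℝ, (NormedSpace.exp (s • A) - 1) 0 0 = Real.cos (θ * s) - 1 := by
    intro s
    rw [key s]
    simp only [Matrix.sub_apply, Matrix.add_apply, Matrix.smul_apply, Matrix.one_apply_eq,
      hA00, hAA00, smul_eq_mul]
    field_simp
    ring
  have e01 : ∀ s : ℝ, (NormedSpace.exp (s • A) - 1) 0 1 = kg / θ * Real.sin (θ * s) := by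
    intro s
    rw [key s]
    simp [Matrix.sub_apply, Matrix.add_apply, Matrix.smul_apply, Matrix.one_apply,
      hA01, hAA01]
    ring
  have e02 : ∀ s : ℝ, (NormedSpace.exp (s • A) - 1) 0 2 =
      -ε * kn / θ * Real.sin (θ * s) := by
    intro s
    rw [key s]
    simp [Matrix.sub_apply, Matrix.add_apply, Matrix.smul_apply, Matrix.one_apply,
      hA02, hAA02]
    ring
  have hIsin : (∫ s in (0:ℝ)..ω, Real.sin (θ * s)) = 0 := by
    rw [intervalIntegral.integral_comp_mul_left Real.sin hθ]
    simp [integral_sin, hcos]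
  have hIcos : (∫ s in (0:ℝ)..ω, Real.cos (θ * s)) = 0 := by
    rw [intervalIntegral.integral_comp_mul_left Real.cos hθ]
    simp [integral_cos, hsin]
  have hcont : Continuous fun s : ℝ => Real.cos (θ * s) := by fun_prop
  refine ⟨?_, ?_, ?_, ?_⟩
  · rw [key ω, hsin, hcos]; simp
  · simp only [e00]
    rw [intervalIntegral.integral_sub (hcont.intervalIntegrable 0 ω) intervalIntegrable_const]
    simp [hIcos]
  · simp only [e01]
    rw [intervalIntegral.integral_const_mul, hIsin, mul_zero]
  · simp only [e02]
    rw [intervalIntegral.integral_const_mul, hIsin, mul_zero]
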